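/- arXiv:1404.5383 — 4 statements merged into one kernel-verified Lean document; each statement's English description precedes it below -/
import Mathlib

section
/- If θ_1, …, θ_n are the eigenvalues (with multiplicity) of the normalized signless Laplacian of a graph G with no isolated vertices, then the Randić energy of the subdivision graph satisfies RE(S(G)) = √2 · Σ_{i=1}^n √θ_i. -/
open Matrix BigOperators

variable {V : Type*} [Fintype V] [DecidableEq V]

/-- The Randić matrix of a graph. -/
noncomputable def randicMatrix (G : SimpleGraph V) [DecidableRel G.Adj] : Matrix V V ℝ :=
  Matrix.of fun i j => if G.Adj i j then 1 / Real.sqrt (G.degree i * G.degree j) else 0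

/-- The vertex-edge incidence matrix of a graph. -/
def incMatrix' (G : SimpleGraph V) : Matrix V G.edgeSet ℝ :=
  Matrix.of fun v e => if v ∈ (e : Sym2 V) then 1 else 0

/-- The subdivision graph: new (edge) vertices first, then old vertices. -/
def subdivision (G : SimpleGraph V) : SimpleGraph (G.edgeSet ⊕ V) where
  Adj x y :=
    match x, y with
    | Sum.inl e, Sum.inr v => v ∈ (e : Sym2 V)
    | Sum.inr v, Sum.inl e => v ∈ (e : Sym2 V)
    | _, _ => False
  symm := ⟨by rintro (e | v) (f | w) h <;> simp_all⟩
  loopless := ⟨by rintro (e | v) h <;> simp_all⟩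

instance (G : SimpleGraph V) : DecidableRel (subdivision G).Adj := by
  rintro (e | v) (f | w) <;> simp only [subdivision] <;> infer_instance

/-! ### Auxiliary lemmas -/

section LinAlgAux

open Polynomial

variable {k : Type*} [Fintype k] [DecidableEq k]

lemma my_det_conj (p : ℝ[X]) (U D W : Matrix k k ℝ) (hUW : U * W = 1) :
    (p • (1 : Matrix k k ℝ[X]) - (U * D * W).map (C : ℝ →+* ℝ[X])).det
      = (p • (1 : Matrix k k ℝ[X]) - D.map (C : ℝ →+* ℝ[X])).det := by
  have key : p • (1 : Matrix k k ℝ[X]) - (U * D * W).map (C : ℝ →+* ℝ[X])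
      = (U.map (C : ℝ →+* ℝ[X])) * (p • (1 : Matrix k k ℝ[X]) - D.map (C : ℝ →+* ℝ[X]))
        * (W.map (C : ℝ →+* ℝ[X])) := by
    rw [Matrix.mul_sub, Matrix.sub_mul]
    congr 1
    · rw [mul_smul_comm, mul_one, smul_mul_assoc, ← Matrix.map_mul, hUW,
        Matrix.map_one _ (map_zero C) (map_one C)]
    · rw [← Matrix.map_mul, ← Matrix.map_mul]
  have h1 : (U.map (C : ℝ →+* ℝ[X])).det * (W.map (C : ℝ →+* ℝ[X])).det = 1 := by
    rw [← det_mul, ← Matrix.map_mul, hUW, Matrix.map_one _ (map_zero C) (map_one C), det_one]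
  rw [key, det_mul, det_mul, mul_right_comm, h1, one_mul]

lemma my_det_diag (p : ℝ[X]) (d : k → ℝ) :
    (p • (1 : Matrix k k ℝ[X]) - (diagonal d).map (C : ℝ →+* ℝ[X])).det
      = ∏ i, (p - C (d i)) := by
  have : p • (1 : Matrix k k ℝ[X]) - (diagonal d).map (C : ℝ →+* ℝ[X])
      = diagonal (fun i => p - C (d i)) := by
    ext i j
    rcases eq_or_ne i j with h | h
    · subst h; simp
    · simp [h, Matrix.one_apply_ne h]
  rw [this, det_diagonal]

lemma my_charpoly_det (M : Matrix k k ℝ) :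
    M.charpoly = ((X : ℝ[X]) • (1 : Matrix k k ℝ[X]) - M.map (C : ℝ →+* ℝ[X])).det := by
  unfold Matrix.charpoly Matrix.charmatrix
  congr 1
  ext i j
  rcases eq_or_ne i j with h | h
  · subst h; simp
  · simp [h, Matrix.one_apply_ne h]

lemma my_det_smul_herm (p : ℝ[X]) {A : Matrix k k ℝ} (hA : A.IsHermitian) (c : ℝ) :
    (p • (1 : Matrix k k ℝ[X]) - ((c • A).map (C : ℝ →+* ℝ[X]))).det
      = ∏ i, (p - C (c * hA.eigenvalues i)) := by
  have hU : (hA.eigenvectorUnitary : Matrix k k ℝ) * (star hA.eigenvectorUnitary : Matrix k k ℝ)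
      = 1 := Matrix.mem_unitaryGroup_iff.mp hA.eigenvectorUnitary.2
  have hsp : c • A = (hA.eigenvectorUnitary : Matrix k k ℝ)
      * (diagonal fun i => c * hA.eigenvalues i) * (star hA.eigenvectorUnitary : Matrix k k ℝ) := by
    conv_lhs => rw [hA.spectral_theorem]
    rw [Unitary.conjStarAlgAut_apply, ← smul_mul_assoc, ← mul_smul_comm]
    congr 2
    ext i j
    rcases eq_or_ne i j with h | h
    · subst h; simp [RCLike.ofReal_real_eq_id]
    · simp [h]
  rw [hsp, my_det_conj _ _ _ _ hU, my_det_diag]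

lemma my_charpoly_herm {A : Matrix k k ℝ} (hA : A.IsHermitian) :
    A.charpoly = ∏ i, ((X : ℝ[X]) - C (hA.eigenvalues i)) := by
  rw [my_charpoly_det]
  have := my_det_smul_herm (X : ℝ[X]) hA 1
  simpa using this

lemma my_charpoly_blocks {E : Type*} [Fintype E] [DecidableEq E] (N : Matrix E k ℝ) :
    (fromBlocks 0 N Nᵀ 0).charpoly * X ^ (Fintype.card k)
      = X ^ (Fintype.card E)
        * (((X : ℝ[X]) ^ 2) • (1 : Matrix k k ℝ[X]) - (Nᵀ * N).map (C : ℝ →+* ℝ[X])).det := by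
  set N' : Matrix E k ℝ[X] := N.map (C : ℝ →+* ℝ[X]) with hN'
  set M' : Matrix k E ℝ[X] := Nᵀ.map (C : ℝ →+* ℝ[X]) with hM'
  have hS : (X : ℝ[X]) • (1 : Matrix (E ⊕ k) (E ⊕ k) ℝ[X])
        - (fromBlocks 0 N Nᵀ 0).map (C : ℝ →+* ℝ[X])
      = fromBlocks ((X : ℝ[X]) • 1) (-N') (-M') ((X : ℝ[X]) • 1) := by
    ext (i | i) (j | j) <;>
      simp [fromBlocks, hN', hM', Matrix.map_apply, Matrix.one_apply, Sum.inl.injEq,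
        Sum.inr.injEq, apply_ite]
  have hc : N' * ((X : ℝ[X]) • (1 : Matrix k k ℝ[X])) = (X : ℝ[X]) • N' := by
    rw [Matrix.mul_smul, Matrix.mul_one]
  have b11 : (X : ℝ[X]) • (1 : Matrix E E ℝ[X]) * (1 : Matrix E E ℝ[X])
      + (-N') * (0 : Matrix k E ℝ[X]) = (X : ℝ[X]) • (1 : Matrix E E ℝ[X]) := by simp
  have b12 : (X : ℝ[X]) • (1 : Matrix E E ℝ[X]) * N'
      + (-N') * ((X : ℝ[X]) • (1 : Matrix k k ℝ[X])) = 0 := by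
    rw [Matrix.smul_mul, Matrix.one_mul, Matrix.neg_mul, hc]
    abel
  have b21 : (-M') * (1 : Matrix E E ℝ[X])
      + (X : ℝ[X]) • (1 : Matrix k k ℝ[X]) * (0 : Matrix k E ℝ[X]) = -M' := by simp
  have b22 : (-M') * N' + (X : ℝ[X]) • (1 : Matrix k k ℝ[X]) * ((X : ℝ[X]) • (1 : Matrix k k ℝ[X]))
      = ((X : ℝ[X]) ^ 2) • (1 : Matrix k k ℝ[X]) - (Nᵀ * N).map (C : ℝ →+* ℝ[X]) := by
    rw [Matrix.neg_mul, hM', hN', ← Matrix.map_mul, Matrix.smul_mul, Matrix.one_mul, smul_smul,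
      ← pow_two]
    abel
  have key : fromBlocks ((X : ℝ[X]) • 1) (-N') (-M') ((X : ℝ[X]) • 1) *
        fromBlocks 1 N' 0 ((X : ℝ[X]) • 1)
      = fromBlocks ((X : ℝ[X]) • 1) 0 (-M')
          (((X : ℝ[X]) ^ 2) • 1 - (Nᵀ * N).map (C : ℝ →+* ℝ[X])) := by
    rw [fromBlocks_multiply, b11, b12, b21, b22]
  have hdet := congrArg Matrix.det key
  rw [det_mul, det_fromBlocks_zero₂₁, det_one, one_mul, det_smul, det_one, mul_one,
    det_fromBlocks_zero₁₂, det_smul, det_one, mul_one] at hdet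
  rw [my_charpoly_det, hS]
  exact hdet

lemma my_roots_prod {ι : Type*} [Fintype ι] (f : ι → ℝ) :
    (∏ i, ((X : ℝ[X]) - C (f i))).roots = Finset.univ.val.map f := by
  have h1 : ∏ i, ((X : ℝ[X]) - C (f i))
      = ((Finset.univ.val.map f).map fun r => (X : ℝ[X]) - C r).prod := by
    rw [Finset.prod_eq_multiset_prod, Multiset.map_map]
    rfl
  rw [h1, Polynomial.roots_multiset_prod_X_sub_C]

end LinAlgAux

section GraphAux

set_option linter.unusedSectionVars false

variable (G : SimpleGraph V) [DecidableRel G.Adj]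

lemma subdivision_adj_inl_inr (e : G.edgeSet) (v : V) :
    (subdivision G).Adj (Sum.inl e) (Sum.inr v) ↔ v ∈ (e : Sym2 V) := Iff.rfl

lemma subdivision_adj_inr_inl (e : G.edgeSet) (v : V) :
    (subdivision G).Adj (Sum.inr v) (Sum.inl e) ↔ v ∈ (e : Sym2 V) := Iff.rfl

lemma subdivision_adj_inl_inl (e f : G.edgeSet) :
    ¬ (subdivision G).Adj (Sum.inl e) (Sum.inl f) := fun h => h

lemma subdivision_adj_inr_inr (v w : V) :
    ¬ (subdivision G).Adj (Sum.inr v) (Sum.inr w) := fun h => h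

lemma card_filter_mem (v : V) :
    (Finset.univ.filter fun e : G.edgeSet => v ∈ (e : Sym2 V)).card = G.degree v := by
  rw [← SimpleGraph.card_incidenceFinset_eq_degree]
  refine Finset.card_bij (fun e _ => (e : Sym2 V)) ?_ ?_ ?_
  · intro e he
    rw [SimpleGraph.mem_incidenceFinset]
    exact ⟨e.2, by simpa using he⟩
  · intro e he f hf h
    exact Subtype.ext h
  · intro e he
    rw [SimpleGraph.mem_incidenceFinset] at he
    exact ⟨⟨e, he.1⟩, by simpa using he.2, rfl⟩

lemma subdivision_degree_inl (e : G.edgeSet) :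
    (subdivision G).degree (Sum.inl e) = 2 := by
  obtain ⟨e, he⟩ := e
  induction e with
  | _ x y =>
    have hxy : x ≠ y := ((SimpleGraph.mem_edgeSet G).mp he).ne
    rw [SimpleGraph.degree]
    have : (subdivision G).neighborFinset (Sum.inl ⟨s(x, y), he⟩)
        = {Sum.inr x, Sum.inr y} := by
      ext (f | w)
      · simp [SimpleGraph.mem_neighborFinset, subdivision_adj_inl_inl]
      · simp [SimpleGraph.mem_neighborFinset, subdivision_adj_inl_inr, Sym2.mem_iff]
    rw [this, Finset.card_insert_of_notMem (by simp [hxy]), Finset.card_singleton]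

lemma subdivision_degree_inr (v : V) :
    (subdivision G).degree (Sum.inr v) = G.degree v := by
  rw [← card_filter_mem G v, SimpleGraph.degree]
  have : (subdivision G).neighborFinset (Sum.inr v)
      = (Finset.univ.filter fun e : G.edgeSet => v ∈ (e : Sym2 V)).image Sum.inl := by
    ext (f | w)
    · simp [SimpleGraph.mem_neighborFinset, subdivision_adj_inr_inl]
    · simp [SimpleGraph.mem_neighborFinset, subdivision_adj_inr_inr]
  rw [this, Finset.card_image_of_injective _ Sum.inl_injective]

lemma card_filter_pair (u v : V) (huv : u ≠ v) :
    (Finset.univ.filter fun e : G.edgeSet => u ∈ (e : Sym2 V) ∧ v ∈ (e : Sym2 V)).card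
      = if G.Adj u v then 1 else 0 := by
  split_ifs with h
  · rw [Finset.card_eq_one]
    refine ⟨⟨s(u, v), (SimpleGraph.mem_edgeSet G).mpr h⟩, ?_⟩
    ext e
    simp only [Finset.mem_filter, Finset.mem_univ, true_and, Finset.mem_singleton,
      Sym2.mem_and_mem_iff huv, Subtype.ext_iff]
  · rw [Finset.card_eq_zero, Finset.filter_eq_empty_iff]
    intro e _
    rw [Sym2.mem_and_mem_iff huv]
    intro he
    exact h ((SimpleGraph.mem_edgeSet G).mp (he ▸ e.2))

/-- The scaled incidence-type matrix appearing as the off-diagonal block of the Randić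
matrix of the subdivision graph. -/
noncomputable def NMat (G : SimpleGraph V) [DecidableRel G.Adj] : Matrix G.edgeSet V ℝ :=
  Matrix.of fun e v => if v ∈ (e : Sym2 V) then 1 / Real.sqrt (2 * G.degree v) else 0

lemma randic_subdivision_eq :
    randicMatrix (subdivision G) = fromBlocks 0 (NMat G) (NMat G)ᵀ 0 := by
  ext (e | v) (f | w)
  · simp [randicMatrix, fromBlocks, subdivision_adj_inl_inl]
  · simp only [randicMatrix, Matrix.of_apply, fromBlocks_apply₁₂, NMat,
      subdivision_degree_inl, subdivision_degree_inr]
    rw [if_congr (subdivision_adj_inl_inr G e w) rfl rfl]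
    push_cast
    rfl
  · simp only [randicMatrix, Matrix.of_apply, fromBlocks_apply₂₁, NMat, transpose_apply,
      subdivision_degree_inl, subdivision_degree_inr]
    rw [if_congr (subdivision_adj_inr_inl G f v) rfl rfl]
    push_cast
    rw [mul_comm]
  · simp [randicMatrix, fromBlocks, subdivision_adj_inr_inr]

lemma NtN_eq (hG : ∀ v : V, 0 < G.degree v) :
    (NMat G)ᵀ * NMat G = (2⁻¹ : ℝ) • (1 + randicMatrix G) := by
  ext u v
  simp only [Matrix.mul_apply, transpose_apply, NMat, Matrix.of_apply, Matrix.smul_apply,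
    Matrix.add_apply, Matrix.one_apply, randicMatrix, smul_eq_mul]
  have hrw : ∀ e : G.edgeSet,
      (if u ∈ (e : Sym2 V) then 1 / Real.sqrt (2 * (G.degree u : ℝ)) else 0)
        * (if v ∈ (e : Sym2 V) then 1 / Real.sqrt (2 * (G.degree v : ℝ)) else 0)
      = if u ∈ (e : Sym2 V) ∧ v ∈ (e : Sym2 V) then
          1 / Real.sqrt (2 * (G.degree u : ℝ)) * (1 / Real.sqrt (2 * (G.degree v : ℝ)))
        else 0 := by
    intro e; split_ifs with h1 h2 h3 <;> simp_all
  rw [Finset.sum_congr rfl fun e _ => hrw e, ← Finset.sum_filter, Finset.sum_const,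
    nsmul_eq_mul]
  have hdu : (0:ℝ) < (G.degree u : ℝ) := by exact_mod_cast hG u
  have hdv : (0:ℝ) < (G.degree v : ℝ) := by exact_mod_cast hG v
  rcases eq_or_ne u v with h | h
  · subst h
    have hfilter : (Finset.univ.filter fun e : G.edgeSet => u ∈ (e : Sym2 V) ∧ u ∈ (e : Sym2 V))
        = Finset.univ.filter fun e : G.edgeSet => u ∈ (e : Sym2 V) := by
      simp
    rw [hfilter, card_filter_mem]
    have h2d : (0:ℝ) < 2 * (G.degree u : ℝ) := by linarith
    rw [div_mul_div_comm, one_mul, Real.mul_self_sqrt h2d.le, if_pos rfl,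
      if_neg (G.loopless.irrefl u)]
    field_simp
    ring
  · rw [card_filter_pair G u v h, if_neg h]
    by_cases hadj : G.Adj u v
    · rw [if_pos hadj, if_pos hadj]
      have h2 : Real.sqrt 2 * Real.sqrt 2 = 2 := Real.mul_self_sqrt (by norm_num)
      rw [Real.sqrt_mul (by norm_num : (0:ℝ) ≤ 2) (G.degree u : ℝ),
        Real.sqrt_mul (by norm_num : (0:ℝ) ≤ 2) (G.degree v : ℝ),
        Real.sqrt_mul hdu.le]
      rw [Nat.cast_one, one_mul, zero_add, div_mul_div_comm, one_mul,
        show Real.sqrt 2 * Real.sqrt (G.degree u : ℝ)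
            * (Real.sqrt 2 * Real.sqrt (G.degree v : ℝ))
          = 2 * (Real.sqrt (G.degree u : ℝ) * Real.sqrt (G.degree v : ℝ)) from by
        linear_combination (Real.sqrt (G.degree u : ℝ) * Real.sqrt (G.degree v : ℝ)) * h2]
      ring
    · rw [if_neg hadj, if_neg hadj]
      norm_num

end GraphAux

open Polynomial in
/-- If `θ_1, …, θ_n` are the eigenvalues (with multiplicity) of the normalized signless
Laplacian `Q = I + R` of a graph `G` with no isolated vertices, then the Randić energy of
the subdivision graph satisfies `RE(S(G)) = √2 · ∑ √θ_i`. -/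
theorem randicEnergy_subdivision (G : SimpleGraph V) [DecidableRel G.Adj]
    (hG : ∀ v : V, 0 < G.degree v)
    (hQ : (1 + randicMatrix G).IsHermitian)
    (hR : (randicMatrix (subdivision G)).IsHermitian) :
    ∑ j, |hR.eigenvalues j| = Real.sqrt 2 * ∑ i, Real.sqrt (hQ.eigenvalues i) := by
  classical
  have hA : randicMatrix (subdivision G) = fromBlocks 0 (NMat G) (NMat G)ᵀ 0 :=
    randic_subdivision_eq G
  have hNtN := NtN_eq G hG
  -- the characteristic polynomial identity
  have hcp : (randicMatrix (subdivision G)).charpoly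
      = ∏ j, ((X : ℝ[X]) - C (hR.eigenvalues j)) := my_charpoly_herm hR
  have hdet2 : (((X : ℝ[X]) ^ 2) • (1 : Matrix V V ℝ[X])
        - ((NMat G)ᵀ * NMat G).map (C : ℝ →+* ℝ[X])).det
      = ∏ i, ((X : ℝ[X]) ^ 2 - C (2⁻¹ * hQ.eigenvalues i)) := by
    rw [hNtN]
    exact my_det_smul_herm _ hQ _
  have hpoly : (∏ j, ((X : ℝ[X]) - C (hR.eigenvalues j))) * X ^ Fintype.card V
      = X ^ Fintype.card G.edgeSet * ∏ i, ((X : ℝ[X]) ^ 2 - C (2⁻¹ * hQ.eigenvalues i)) := by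
    rw [← hcp, hA, my_charpoly_blocks (NMat G), hdet2]
  -- nonnegativity of the eigenvalues of `Q`
  have hpsd : (1 + randicMatrix G).PosSemidef := by
    have hp : ((NMat G)ᵀ * NMat G).PosSemidef := by
      have := Matrix.posSemidef_conjTranspose_mul_self (NMat G)
      rwa [Matrix.conjTranspose_eq_transpose_of_trivial] at this
    have h1 : (1 + randicMatrix G) = (NMat G)ᵀ * NMat G + (NMat G)ᵀ * NMat G := by
      rw [hNtN, ← two_smul ℝ, smul_smul]
      norm_num
    rw [h1]
    exact hp.add hp
  have hθ0 : ∀ i, 0 ≤ hQ.eigenvalues i := fun i => hpsd.eigenvalues_nonneg i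
  -- factor each quadratic
  set a : V → ℝ := fun i => Real.sqrt (2⁻¹ * hQ.eigenvalues i) with hadef
  have hfac : ∀ i : V, ((X : ℝ[X]) ^ 2 - C (2⁻¹ * hQ.eigenvalues i))
      = ((X : ℝ[X]) - C (a i)) * ((X : ℝ[X]) - C (-a i)) := by
    intro i
    have hsq : a i ^ 2 = 2⁻¹ * hQ.eigenvalues i :=
      Real.sq_sqrt (mul_nonneg (by norm_num) (hθ0 i))
    rw [← hsq, map_neg, map_pow]
    ring
  rw [Finset.prod_congr rfl fun i _ => hfac i, Finset.prod_mul_distrib] at hpoly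
  -- extract the multiset of roots
  have hmonL : (∏ j, ((X : ℝ[X]) - C (hR.eigenvalues j))).Monic :=
    monic_prod_of_monic _ _ fun j _ => monic_X_sub_C _
  have hmonA : (∏ i, ((X : ℝ[X]) - C (a i))).Monic :=
    monic_prod_of_monic _ _ fun j _ => monic_X_sub_C _
  have hmonB : (∏ i, ((X : ℝ[X]) - C (-a i))).Monic :=
    monic_prod_of_monic _ _ fun j _ => monic_X_sub_C _
  have hroots := congrArg Polynomial.roots hpoly
  rw [Polynomial.roots_mul (hmonL.mul (monic_X_pow _)).ne_zero,
    Polynomial.roots_mul (((monic_X_pow _).mul (hmonA.mul hmonB)).ne_zero),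
    Polynomial.roots_mul ((hmonA.mul hmonB).ne_zero),
    Polynomial.roots_pow, Polynomial.roots_X, Polynomial.roots_pow, Polynomial.roots_X,
    my_roots_prod, my_roots_prod, my_roots_prod] at hroots
  -- sum the absolute values of both sides
  have hsum := congrArg (fun s : Multiset ℝ => (s.map fun x => |x|).sum) hroots
  simp only [Multiset.map_add, Multiset.sum_add, Multiset.nsmul_singleton,
    Multiset.map_replicate, Multiset.sum_replicate, abs_zero, smul_zero,
    Multiset.map_map, Function.comp] at hsum
  have hfin : ∀ (f : V → ℝ), (Finset.univ.val.map f).sum = ∑ i, f i := fun f => rfl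
  have hfin' : ((Finset.univ.val.map fun j : G.edgeSet ⊕ V => |hR.eigenvalues j|)).sum
      = ∑ j, |hR.eigenvalues j| := rfl
  rw [hfin', hfin, hfin, add_zero, zero_add] at hsum
  have habs : ∀ i : V, |a i| = a i := fun i => abs_of_nonneg (Real.sqrt_nonneg _)
  have habs' : ∀ i : V, |(-a i)| = a i := fun i => by rw [abs_neg]; exact habs i
  rw [hsum]
  rw [Finset.sum_congr rfl fun i _ => habs i, Finset.sum_congr rfl fun i _ => habs' i,
    ← Finset.sum_add_distrib, Finset.mul_sum]
  refine Finset.sum_congr rfl fun i _ => ?_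
  have h2 : Real.sqrt 2 * Real.sqrt 2 = 2 := Real.mul_self_sqrt (by norm_num)
  have hs2 : Real.sqrt 2 ≠ 0 := by positivity
  rw [Real.sqrt_mul (by norm_num : (0:ℝ) ≤ 2⁻¹), Real.sqrt_inv]
  field_simp
  linear_combination (-Real.sqrt (hQ.eigenvalues i)) * h2
end

section
/- A connected graph G has exactly two distinct Randić eigenvalues if and only if G is a complete graph. -/
open Matrix BigOperators

variable {V : Type*} [Fintype V] [DecidableEq V]

lemma mem_spectrum_of_eigen {M : Matrix V V ℝ} {μ : ℝ} {v : V → ℝ} (hv : v ≠ 0)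
    (h : M *ᵥ v = μ • v) : μ ∈ spectrum ℝ M := by
  rw [← AlgEquiv.spectrum_eq (Matrix.toLinAlgEquiv' : Matrix V V ℝ ≃ₐ[ℝ] _),
    ← Module.End.hasEigenvalue_iff_mem_spectrum]
  apply Module.End.hasEigenvalue_of_hasEigenvector (x := v)
  refine ⟨Module.End.mem_eigenspace_iff.2 ?_, hv⟩
  simpa [Matrix.toLinAlgEquiv'_apply] using h

open Polynomial in
lemma spectrum_quad [Nonempty V] {M : Matrix V V ℝ} {α β : ℝ}
    (h : M * M = α • M + β • 1) {μ : ℝ} (hμ : μ ∈ spectrum ℝ M) :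
    μ * μ = α * μ + β := by
  set p : ℝ[X] := X ^ 2 - C α * X - C β with hp
  have haev : aeval M p = 0 := by
    simp [hp, sq, h, Algebra.algebraMap_eq_smul_one]
  have := spectrum.subset_polynomial_aeval M p ⟨μ, hμ, rfl⟩
  rw [haev, spectrum.zero_eq] at this
  simp only [Set.mem_singleton_iff, hp] at this
  simp only [eval_sub, eval_mul, eval_pow, eval_X, eval_C] at this
  nlinarith [this]

lemma quad_of_spectrum {M : Matrix V V ℝ} (hM : M.IsHermitian) {a b : ℝ}
    (hspec : spectrum ℝ M ⊆ {a, b}) :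
    M * M = (a + b) • M - (a * b) • 1 := by
  set U : Matrix V V ℝ := (hM.eigenvectorUnitary : Matrix V V ℝ) with hU
  set D : Matrix V V ℝ := diagonal (RCLike.ofReal ∘ hM.eigenvalues) with hD
  have hsu : star U * U = 1 := (Matrix.mem_unitaryGroup_iff').mp (hM.eigenvectorUnitary).2
  have hus : U * star U = 1 := (Matrix.mem_unitaryGroup_iff).mp (hM.eigenvectorUnitary).2
  have hMeq : M = U * D * star U := hM.spectral_theorem
  have hDD : D * D = (a + b) • D - (a * b) • 1 := by
    rw [hD, diagonal_mul_diagonal]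
    ext i j
    rcases eq_or_ne i j with rfl | hij
    · have hi := hspec (hM.eigenvalues_mem_spectrum_real i)
      simp only [Set.mem_insert_iff, Set.mem_singleton_iff] at hi
      rcases hi with h | h <;>
        simp [diagonal_apply_eq, one_apply_eq, h, RCLike.ofReal] <;> ring
    · simp [diagonal_apply_ne _ hij, one_apply_ne hij]
  have key : M * M = U * (D * D) * star U := by
    rw [hMeq]
    simp only [mul_assoc]
    rw [← mul_assoc (star U) U, hsu, Matrix.one_mul]
  calc M * M = U * ((a + b) • D - (a * b) • 1) * star U := by rw [key, hDD]
    _ = (a + b) • (U * D * star U) - (a * b) • (U * star U) := by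
        simp only [Matrix.mul_sub, Matrix.sub_mul, Matrix.mul_smul, Matrix.smul_mul,
          Matrix.mul_one, mul_assoc]
    _ = (a + b) • M - (a * b) • 1 := by rw [← hMeq, hus]

lemma randic_isHermitian (G : SimpleGraph V) [DecidableRel G.Adj] :
    (randicMatrix G).IsHermitian := by
  ext i j
  simp only [randicMatrix, conjTranspose_apply, of_apply, star_trivial]
  by_cases h : G.Adj i j
  · rw [if_pos h.symm, if_pos h, mul_comm]
  · rw [if_neg (fun hc => h hc.symm), if_neg h]

lemma randic_nonneg (G : SimpleGraph V) [DecidableRel G.Adj] (i j : V) :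
    0 ≤ randicMatrix G i j := by
  simp only [randicMatrix, of_apply]
  split_ifs
  · positivity
  · exact le_refl 0

lemma randic_pos (G : SimpleGraph V) [DecidableRel G.Adj] {i j : V} (h : G.Adj i j) :
    0 < randicMatrix G i j := by
  have hdi : 0 < G.degree i := G.degree_pos_iff_exists_adj i |>.2 ⟨j, h⟩
  have hdj : 0 < G.degree j := G.degree_pos_iff_exists_adj j |>.2 ⟨i, h.symm⟩
  simp only [randicMatrix, of_apply, if_pos h]
  have : (0:ℝ) < Real.sqrt (G.degree i * G.degree j) := by
    apply Real.sqrt_pos.2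
    positivity
  positivity

lemma randic_top_apply [inst : DecidableRel ((⊤ : SimpleGraph V).Adj)]
    (hn : 2 ≤ Fintype.card V) (i j : V) :
    randicMatrix (⊤ : SimpleGraph V) i j =
      if i = j then 0 else ((Fintype.card V : ℝ) - 1)⁻¹ := by
  have h1 : (1:ℕ) ≤ Fintype.card V := le_trans one_le_two hn
  have hcast : ((Fintype.card V - 1 : ℕ) : ℝ) = (Fintype.card V : ℝ) - 1 := by
    push_cast [h1]; ring
  have hpos : (0:ℝ) ≤ (Fintype.card V : ℝ) - 1 := by
    have : (2:ℝ) ≤ (Fintype.card V : ℝ) := by exact_mod_cast hn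
    linarith
  have hnb : ∀ v : V, (⊤ : SimpleGraph V).neighborFinset v = Finset.univ.erase v := by
    intro v
    ext w
    simp [SimpleGraph.mem_neighborFinset, eq_comm]
  have hdeg : ∀ v : V, (⊤ : SimpleGraph V).degree v = Fintype.card V - 1 := by
    intro v
    rw [← SimpleGraph.card_neighborFinset_eq_degree, hnb,
      Finset.card_erase_of_mem (Finset.mem_univ v), Finset.card_univ]
  simp only [randicMatrix, of_apply, SimpleGraph.top_adj, hdeg]
  rcases eq_or_ne i j with rfl | hij
  · simp
  · rw [if_pos hij, if_neg hij, hcast, Real.sqrt_mul_self hpos, one_div]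

/-- A connected graph has exactly two distinct Randić eigenvalues iff it is complete. -/
theorem randic_two_distinct_eigenvalues (G : SimpleGraph V) [DecidableRel G.Adj]
    (hn : 2 ≤ Fintype.card V) (hconn : G.Connected) :
    (spectrum ℝ (randicMatrix G)).ncard = 2 ↔ G = ⊤ := by
  have hne : Nonempty V := Fintype.card_pos_iff.mp (lt_of_lt_of_le two_pos hn)
  constructor
  · intro hcard
    obtain ⟨a, b, hab, hset⟩ := Set.ncard_eq_two.mp hcard
    have hquad : randicMatrix G * randicMatrix G
        = (a + b) • randicMatrix G - (a * b) • 1 :=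
      quad_of_spectrum (randic_isHermitian G) (hset ▸ Set.Subset.rfl)
    -- no common neighbors for nonadjacent pairs
    have hkey : ∀ i j k : V, ¬ G.Adj i j → i ≠ j → G.Adj i k → ¬ G.Adj k j := by
      intro i j k hnadj hij hik hkj
      have hz : (randicMatrix G * randicMatrix G) i j = 0 := by
        rw [hquad]
        simp only [Matrix.sub_apply, Matrix.smul_apply, Matrix.one_apply_ne hij,
          smul_eq_mul, mul_zero, sub_zero]
        simp [randicMatrix, hnadj]
      rw [Matrix.mul_apply] at hz
      have hterm : randicMatrix G i k * randicMatrix G k j = 0 := by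
        have := (Finset.sum_eq_zero_iff_of_nonneg
          (fun k _ => mul_nonneg (randic_nonneg G i k) (randic_nonneg G k j))).mp hz
        exact this k (Finset.mem_univ k)
      exact absurd hterm (ne_of_gt (mul_pos (randic_pos G hik) (randic_pos G hkj)))
    have hadj2 : ∀ i j : V, i ≠ j → G.Adj i j := by
      intro i j hij
      obtain ⟨p⟩ := hconn.preconnected i j
      clear hcard hset
      induction p with
      | nil => exact absurd rfl hij
      | @cons u x w h q ih =>
        rcases eq_or_ne x w with rfl | hxw
        · exact h
        · have hxwadj : G.Adj x w := ih hxw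
          by_contra hnadj
          exact hkey u w x hnadj hij h hxwadj
    ext i j
    simp only [SimpleGraph.top_adj]
    exact ⟨fun h => h.ne, fun h => hadj2 i j h⟩
  · rintro rfl
    set n := Fintype.card V with hcardn
    set c : ℝ := ((n : ℝ) - 1)⁻¹ with hc
    have hn2 : (2:ℝ) ≤ (n:ℝ) := by exact_mod_cast hn
    have hn1pos : (0:ℝ) < (n:ℝ) - 1 := by linarith
    have hcpos : 0 < c := inv_pos.2 hn1pos
    have hcmul : c * ((n:ℝ) - 1) = 1 := inv_mul_cancel₀ (ne_of_gt hn1pos)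
    have hRapp : ∀ i j : V, randicMatrix (⊤ : SimpleGraph V) i j
        = if i = j then 0 else c := fun i j => randic_top_apply hn i j
    set R := randicMatrix (⊤ : SimpleGraph V) with hR
    -- eigenvalue 1
    have hone : (1:ℝ) ∈ spectrum ℝ R := by
      apply mem_spectrum_of_eigen (v := fun _ => (1:ℝ))
      · intro hcon
        have := congrFun hcon (Classical.arbitrary V)
        simp at this
      · funext i
        simp only [mulVec, dotProduct, Pi.smul_apply, smul_eq_mul, mul_one, one_smul]
        have : ∀ j, R i j = c - (if i = j then c else 0) := by
          intro j; rw [hRapp]; split_ifs <;> ring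
        rw [Finset.sum_congr rfl (fun j _ => this j), Finset.sum_sub_distrib,
          Finset.sum_const, Finset.sum_ite_eq, if_pos (Finset.mem_univ i)]
        simp only [Finset.card_univ, nsmul_eq_mul, ← hcardn]
        rw [mul_comm] at hcmul
        linarith [hcmul]
    -- eigenvalue -c
    have hnegc : (-c : ℝ) ∈ spectrum ℝ R := by
      obtain ⟨x, y, hxy⟩ := Fintype.exists_pair_of_one_lt_card (lt_of_lt_of_le one_lt_two hn)
      apply mem_spectrum_of_eigen (v := Pi.single x 1 - Pi.single y 1)
      · intro hcon
        have := congrFun hcon x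
        simp [Pi.single_apply, hxy, hxy.symm] at this
      · funext i
        simp only [mulVec, dotProduct, Pi.sub_apply, Pi.smul_apply, smul_eq_mul]
        have hsx : ∀ z : V, ∑ j, R i j * (Pi.single z 1 : V → ℝ) j = R i z := by
          intro z
          rw [Finset.sum_eq_single z]
          · simp
          · intro j _ hjz; simp [Pi.single_apply, hjz]
          · intro h; exact absurd (Finset.mem_univ z) h
        rw [Finset.sum_congr rfl
          (fun j _ => mul_sub (R i j) ((Pi.single x 1 : V → ℝ) j) ((Pi.single y 1 : V → ℝ) j)),
          Finset.sum_sub_distrib, hsx, hsx, hRapp, hRapp]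
        rcases eq_or_ne i x with rfl | hix
        · simp [Pi.single_apply, hxy, hxy.symm]
        · rcases eq_or_ne i y with rfl | hiy
          · simp [Pi.single_apply, hxy.symm, hix, hix.symm]
          · simp [Pi.single_apply, hix, hiy, hix.symm, hiy.symm]
    -- annihilating quadratic: R² = (1-c)•R + c•1
    have hquad : R * R = (1 - c) • R + c • 1 := by
      ext i j
      rw [Matrix.mul_apply]
      rcases eq_or_ne i j with rfl | hij
      · have hterm : ∀ k, R i k * R k i = c * c - (if i = k then c * c else 0) := by
          intro k; rw [hRapp, hRapp]
          rcases eq_or_ne i k with rfl | h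
          · simp
          · rw [if_neg h, if_neg (Ne.symm h), if_neg h]; ring
        rw [Finset.sum_congr rfl (fun k _ => hterm k), Finset.sum_sub_distrib,
          Finset.sum_const, Finset.sum_ite_eq, if_pos (Finset.mem_univ i)]
        simp only [Matrix.add_apply, Matrix.smul_apply, Matrix.one_apply_eq, smul_eq_mul,
          Finset.card_univ, nsmul_eq_mul, ← hcardn]
        rw [hRapp, if_pos rfl]
        nlinarith [hcmul]
      · have hterm : ∀ k, R i k * R k j
            = c * c - (if i = k then c * c else 0) - (if k = j then c * c else 0) := by
          intro k; rw [hRapp, hRapp]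
          rcases eq_or_ne i k with rfl | h1
          · simp [hij]
          · rcases eq_or_ne k j with rfl | h2
            · simp [h1]
            · simp [h1, h2]
        rw [Finset.sum_congr rfl (fun k _ => hterm k)]
        rw [Finset.sum_sub_distrib, Finset.sum_sub_distrib, Finset.sum_const,
          Finset.sum_ite_eq, Finset.sum_ite_eq', if_pos (Finset.mem_univ i),
          if_pos (Finset.mem_univ j)]
        simp only [Matrix.add_apply, Matrix.smul_apply, Matrix.one_apply_ne hij, smul_eq_mul,
          mul_zero, add_zero, Finset.card_univ, nsmul_eq_mul, ← hcardn]
        rw [hRapp, if_neg hij]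
        nlinarith [hcmul]
    -- spectrum = {1, -c}
    have hsub : spectrum ℝ R ⊆ {1, -c} := by
      intro μ hμ
      have := spectrum_quad hquad hμ
      have hfac : (μ - 1) * (μ + c) = 0 := by linear_combination this
      rcases mul_eq_zero.mp hfac with h | h
      · left; linarith
      · right; simp; linarith
    have hset : spectrum ℝ R = {1, -c} := by
      apply Set.Subset.antisymm hsub
      intro μ hμ
      rcases hμ with rfl | hμ
      · exact hone
      · rw [Set.mem_singleton_iff] at hμ; subst hμ; exact hnegc
    rw [hset]
    exact Set.ncard_pair (by intro h; linarith)
end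

section
/- The Randić energy of the subdivision of the star S_n on n ≥ 2 vertices equals √2·n + 2 − 2√2. -/
open Matrix BigOperators

variable {V : Type*} [Fintype V] [DecidableEq V]

/-- The star graph on `n` vertices: vertex `0` is adjacent to all others. -/
def starGraph (n : ℕ) : SimpleGraph (Fin n) where
  Adj i j := i ≠ j ∧ ((i : ℕ) = 0 ∨ (j : ℕ) = 0)
  symm := ⟨by tauto⟩
  loopless := ⟨by tauto⟩

instance (n : ℕ) : DecidableRel (starGraph n).Adj := fun i j =>
  inferInstanceAs (Decidable (i ≠ j ∧ ((i : ℕ) = 0 ∨ (j : ℕ) = 0)))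

open Sum

set_option linter.unusedSectionVars false

namespace StarSub
variable (n : ℕ) [NeZero n]

abbrev E := (starGraph n).edgeSet

lemma zero_mem (e : E n) : (0 : Fin n) ∈ (e : Sym2 (Fin n)) := by
  obtain ⟨s, hs⟩ := e
  induction s using Sym2.ind with
  | _ i j =>
    rw [SimpleGraph.mem_edgeSet] at hs
    obtain ⟨hne, h0⟩ := hs
    simp only [Sym2.mem_iff]
    rcases h0 with h | h
    · exact Or.inl (by ext; simp [h])
    · exact Or.inr (by ext; simp [h])

noncomputable def leaf (e : E n) : Fin n := Sym2.Mem.other' (zero_mem n e)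

lemma leaf_spec (e : E n) : s(0, leaf n e) = (e : Sym2 (Fin n)) :=
  Sym2.other_spec' (zero_mem n e)

lemma leaf_ne_zero (e : E n) : leaf n e ≠ 0 := by
  intro h
  have := leaf_spec n e
  rw [h] at this
  have hd := (starGraph n).not_isDiag_of_mem_edgeSet e.2
  rw [← this] at hd
  exact hd (Sym2.mk_isDiag_iff.mpr rfl)

lemma mem_iff (e : E n) (v : Fin n) :
    v ∈ (e : Sym2 (Fin n)) ↔ v = 0 ∨ v = leaf n e := by
  rw [← leaf_spec n e, Sym2.mem_iff]

noncomputable def eqv : E n ≃ {j : Fin n // j ≠ 0} where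
  toFun e := ⟨leaf n e, leaf_ne_zero n e⟩
  invFun j := ⟨s(0, j.1), by
    rw [SimpleGraph.mem_edgeSet]
    exact ⟨Ne.symm j.2, Or.inl (by simp)⟩⟩
  left_inv e := Subtype.ext (leaf_spec n e)
  right_inv j := Subtype.ext (by
    have h := leaf_spec n ⟨s(0, j.1), by
      rw [SimpleGraph.mem_edgeSet]; exact ⟨Ne.symm j.2, Or.inl (by simp)⟩⟩
    rcases Sym2.eq_iff.mp h with ⟨-, h2⟩ | ⟨h1, h2⟩
    · exact h2
    · exact absurd h1.symm j.2)

lemma leaf_inj (e f : E n) (h : leaf n e = leaf n f) : e = f := by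
  have := (eqv n).injective (a₁ := e) (a₂ := f) (Subtype.ext h)
  exact this

lemma card_E : Fintype.card (E n) = n - 1 := by
  rw [Fintype.card_congr (eqv n), Fintype.card_subtype_compl, Fintype.card_subtype_eq, Fintype.card_fin]

lemma sum_edge (F : Fin n → ℝ) :
    ∑ e : E n, F (leaf n e) = ∑ j ∈ Finset.univ.erase (0 : Fin n), F j := by
  have h1 : ∑ e : E n, F (leaf n e) = ∑ j : {j : Fin n // j ≠ 0}, F j.1 :=
    Fintype.sum_equiv (eqv n) _ _ (fun e => rfl)
  rw [h1, ← Finset.sum_subtype (Finset.univ.erase (0 : Fin n)) (fun j => by simp) F]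


lemma adj_inl_inr (e : E n) (v : Fin n) :
    (subdivision (starGraph n)).Adj (inl e) (inr v) ↔ (v = 0 ∨ v = leaf n e) := by
  show v ∈ (e : Sym2 (Fin n)) ↔ _
  exact mem_iff n e v

lemma adj_inr_inl (e : E n) (v : Fin n) :
    (subdivision (starGraph n)).Adj (inr v) (inl e) ↔ (v = 0 ∨ v = leaf n e) := by
  show v ∈ (e : Sym2 (Fin n)) ↔ _
  exact mem_iff n e v

lemma not_adj_inl_inl (e f : E n) : ¬ (subdivision (starGraph n)).Adj (inl e) (inl f) := by
  show ¬ False; exact id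

lemma not_adj_inr_inr (u v : Fin n) : ¬ (subdivision (starGraph n)).Adj (inr u) (inr v) := by
  show ¬ False; exact id

lemma deg_inl (e : E n) : (subdivision (starGraph n)).degree (inl e) = 2 := by
  show ((subdivision (starGraph n)).neighborFinset (inl e)).card = 2
  have h : (subdivision (starGraph n)).neighborFinset (inl e)
      = {inr (0 : Fin n), inr (leaf n e)} := by
    ext w
    rcases w with f | v
    · simp [SimpleGraph.mem_neighborFinset, not_adj_inl_inl]
    · simp [SimpleGraph.mem_neighborFinset, adj_inl_inr]
  rw [h, Finset.card_pair (by simp [Ne.symm (leaf_ne_zero n e)])]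

lemma deg_inr_zero : (subdivision (starGraph n)).degree (inr (0 : Fin n)) = n - 1 := by
  show ((subdivision (starGraph n)).neighborFinset (inr 0)).card = n - 1
  have h : (subdivision (starGraph n)).neighborFinset (inr (0:Fin n))
      = Finset.univ.map ⟨inl, Sum.inl_injective⟩ := by
    ext w
    rcases w with f | v
    · simp [SimpleGraph.mem_neighborFinset, adj_inr_inl]
    · simp [SimpleGraph.mem_neighborFinset, not_adj_inr_inr]
  rw [h, Finset.card_map, Finset.card_univ, card_E]

lemma deg_inr (v : Fin n) (hv : v ≠ 0) :
    (subdivision (starGraph n)).degree (inr v) = 1 := by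
  show ((subdivision (starGraph n)).neighborFinset (inr v)).card = 1
  have h : (subdivision (starGraph n)).neighborFinset (inr v)
      = {inl ((eqv n).symm ⟨v, hv⟩)} := by
    ext w
    rcases w with f | u
    · simp only [SimpleGraph.mem_neighborFinset, adj_inr_inl, Finset.mem_singleton]
      constructor
      · rintro (h0 | hl)
        · exact absurd h0 hv
        · have : (eqv n) f = ⟨v, hv⟩ := Subtype.ext hl.symm
          rw [← this, Equiv.symm_apply_apply]
      · intro hh
        obtain rfl : f = (eqv n).symm ⟨v, hv⟩ := Sum.inl_injective hh
        right
        have : (eqv n) ((eqv n).symm ⟨v, hv⟩) = ⟨v, hv⟩ := Equiv.apply_symm_apply _ _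
        exact (congrArg Subtype.val this).symm
    · simp [SimpleGraph.mem_neighborFinset, not_adj_inr_inr]
  rw [h, Finset.card_singleton]

noncomputable def alpha : ℝ := 1 / Real.sqrt (2 * ((n:ℝ) - 1))
noncomputable def beta : ℝ := 1 / Real.sqrt 2

noncomputable def MM : Matrix (E n ⊕ Fin n) (E n ⊕ Fin n) ℝ := Matrix.of fun x y =>
  match x, y with
  | inl e, inr v => (if v = 0 then alpha n else 0) + (if v = leaf n e then beta else 0)
  | inr v, inl e => (if v = 0 then alpha n else 0) + (if v = leaf n e then beta else 0)
  | _, _ => 0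

lemma randic_eq (hn : 2 ≤ n) : randicMatrix (subdivision (starGraph n)) = MM n := by
  have hcast : ((n : ℝ) - 1) = ((n - 1 : ℕ) : ℝ) := by
    have : (1:ℕ) ≤ n := by omega
    push_cast [this]
    ring
  ext x y
  rcases x with e | v <;> rcases y with f | w
  · simp [randicMatrix, MM, not_adj_inl_inl]
  · simp only [randicMatrix, MM, Matrix.of_apply, adj_inl_inr, deg_inl]
    by_cases h0 : w = 0
    · subst h0
      rw [if_pos (Or.inl rfl), if_pos rfl, if_neg (Ne.symm (leaf_ne_zero n e)), add_zero,
        deg_inr_zero, alpha]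
      rw [hcast]
      norm_num
    · by_cases hl : w = leaf n e
      · rw [if_pos (Or.inr hl), if_neg h0, zero_add, if_pos hl, deg_inr n w h0, beta]
        norm_num
      · rw [if_neg (by tauto), if_neg h0, if_neg hl, add_zero]
  · simp only [randicMatrix, MM, Matrix.of_apply, adj_inr_inl, deg_inl]
    by_cases h0 : v = 0
    · subst h0
      rw [if_pos (Or.inl rfl), if_pos rfl, if_neg (Ne.symm (leaf_ne_zero n f)), add_zero,
        deg_inr_zero, alpha]
      rw [hcast]
      norm_num [mul_comm]
    · by_cases hl : v = leaf n f
      · rw [if_pos (Or.inr hl), if_neg h0, zero_add, if_pos hl, deg_inr n v h0, beta]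
        norm_num
      · rw [if_neg (by tauto), if_neg h0, if_neg hl, add_zero]
  · simp [randicMatrix, MM, not_adj_inr_inr]


lemma leaf_eq_iff (e f : E n) : leaf n e = leaf n f ↔ e = f :=
  ⟨leaf_inj n e f, fun h => h ▸ rfl⟩

lemma m_pos (hn : 2 ≤ n) : (0:ℝ) < (n:ℝ) - 1 := by
  have : (2:ℝ) ≤ (n:ℝ) := by exact_mod_cast hn
  linarith

lemma beta_mul_self : beta * beta = 1/2 := by
  rw [beta, div_mul_div_comm, one_mul, Real.mul_self_sqrt (by norm_num)]

lemma alpha_mul_self (hn : 2 ≤ n) : alpha n * alpha n = 1/(2*((n:ℝ)-1)) := by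
  rw [alpha, div_mul_div_comm, one_mul,
    Real.mul_self_sqrt (by nlinarith [m_pos n hn])]

noncomputable def ab : ℝ := 1 / (2 * Real.sqrt ((n:ℝ) - 1))

lemma sqrt4 : Real.sqrt 4 = 2 := by
  rw [show (4:ℝ) = 2^2 by norm_num, Real.sqrt_sq (by norm_num)]

lemma alpha_mul_beta (hn : 2 ≤ n) : alpha n * beta = ab n := by
  have hm : (0:ℝ) ≤ (n:ℝ) - 1 := le_of_lt (m_pos n hn)
  rw [alpha, beta, ab, div_mul_div_comm, one_mul, ← Real.sqrt_mul (by linarith)]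
  rw [show (2*((n:ℝ)-1))*2 = 4*((n:ℝ)-1) by ring, Real.sqrt_mul (by norm_num), sqrt4]

lemma ab_mul_self (hn : 2 ≤ n) : ab n * ab n = 1/(4*((n:ℝ)-1)) := by
  have hm : (0:ℝ) ≤ (n:ℝ) - 1 := le_of_lt (m_pos n hn)
  rw [ab, div_mul_div_comm, one_mul,
    show (2*Real.sqrt ((n:ℝ)-1))*(2*Real.sqrt ((n:ℝ)-1))
      = 4*(Real.sqrt ((n:ℝ)-1)*Real.sqrt ((n:ℝ)-1)) by ring,
    Real.mul_self_sqrt hm]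

noncomputable def SS : Matrix (E n ⊕ Fin n) (E n ⊕ Fin n) ℝ := Matrix.of fun x y =>
  match x, y with
  | inl e, inl f => 1/(2*((n:ℝ)-1)) + (if e = f then (1/2:ℝ) else 0)
  | inr u, inr v =>
      if u = 0 then (if v = 0 then (1/2:ℝ) else ab n)
      else (if v = 0 then ab n else if u = v then (1/2:ℝ) else 0)
  | _, _ => 0

noncomputable def S2 : Matrix (E n ⊕ Fin n) (E n ⊕ Fin n) ℝ := Matrix.of fun x y =>
  match x, y with
  | inl e, inl f => 3/(4*((n:ℝ)-1)) + (if e = f then (1/4:ℝ) else 0)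
  | inr u, inr v =>
      if u = 0 then (if v = 0 then (1/2:ℝ) else ab n)
      else (if v = 0 then ab n else 1/(4*((n:ℝ)-1)) + if u = v then (1/4:ℝ) else 0)
  | _, _ => 0

lemma hcast' (hn : 2 ≤ n) : ((n - 1 : ℕ) : ℝ) = (n:ℝ) - 1 := by
  have : (1:ℕ) ≤ n := by omega
  push_cast [this]; ring

lemma hcard : (Finset.univ.erase (0 : Fin n)).card = n - 1 := by
  rw [Finset.card_erase_of_mem (Finset.mem_univ _), Finset.card_univ, Fintype.card_fin]

lemma mul_MM (hn : 2 ≤ n) : MM n * MM n = SS n := by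
  have hne : (2:ℝ) * ((n:ℝ)-1) ≠ 0 := by nlinarith [m_pos n hn]
  ext x y
  have he0 : ∀ g : E n, ¬ ((0:Fin n) = leaf n g) := fun g h => leaf_ne_zero n g h.symm
  rcases x with e | u <;> rcases y with f | v
  · rw [Matrix.mul_apply, Fintype.sum_sum_type]
    simp only [MM, SS, Matrix.of_apply, zero_mul, mul_zero, Finset.sum_const_zero, zero_add]
    simp only [add_mul, mul_add, ite_mul, mul_ite, zero_mul, mul_zero, zero_add, add_zero,
      Finset.sum_add_distrib, Finset.sum_ite_eq', Finset.mem_univ, if_true, if_pos rfl,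
      he0 e, he0 f, if_false]
    rw [if_neg (leaf_ne_zero n f)]
    simp only [leaf_eq_iff, alpha_mul_self n hn, beta_mul_self, zero_add]
    by_cases h : e = f
    · subst h; simp
    · simp [h, Ne.symm h]
  · rw [Matrix.mul_apply, Fintype.sum_sum_type]
    simp only [MM, SS, Matrix.of_apply, zero_mul, mul_zero, Finset.sum_const_zero, add_zero]
  · rw [Matrix.mul_apply, Fintype.sum_sum_type]
    simp only [MM, SS, Matrix.of_apply, zero_mul, mul_zero, Finset.sum_const_zero, add_zero]
  · rw [Matrix.mul_apply, Fintype.sum_sum_type]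
    simp only [MM, SS, Matrix.of_apply, zero_mul, mul_zero, Finset.sum_const_zero, add_zero,
      zero_add]
    rw [sum_edge n (fun j => ((if u = 0 then alpha n else 0) + (if u = j then beta else 0)) *
        ((if v = 0 then alpha n else 0) + (if v = j then beta else 0)))]
    by_cases hu : u = 0 <;> by_cases hv : v = 0
    · subst hu; subst hv
      rw [Finset.sum_congr rfl (fun j hj => show _ = alpha n * alpha n from by
        have hj' := (Finset.mem_erase.mp hj).1
        rw [if_pos rfl, if_neg (fun h => hj' h.symm), add_zero]),
        Finset.sum_const, hcard, nsmul_eq_mul, hcast' n hn, alpha_mul_self n hn,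
        if_pos rfl, if_pos rfl]
      have hne' : (n:ℝ) - 1 ≠ 0 := ne_of_gt (m_pos n hn)
      field_simp
    · subst hu
      rw [Finset.sum_congr rfl (fun j hj => show _ = (if v = j then alpha n * beta else 0) from by
        have hj' := (Finset.mem_erase.mp hj).1
        rw [if_pos rfl, if_neg (fun h => hj' h.symm), add_zero, if_neg hv, zero_add, mul_ite,
          mul_zero]),
        Finset.sum_ite_eq, if_pos (Finset.mem_erase.mpr ⟨hv, Finset.mem_univ _⟩),
        alpha_mul_beta n hn, if_pos rfl, if_neg hv]
    · subst hv
      rw [Finset.sum_congr rfl (fun j hj => show _ = (if u = j then beta * alpha n else 0) from by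
        have hj' := (Finset.mem_erase.mp hj).1
        rw [if_neg hu, zero_add, if_pos rfl,
          if_neg (show ¬((0:Fin n) = j) from fun h => hj' h.symm), add_zero, ite_mul,
          zero_mul]),
        Finset.sum_ite_eq, if_pos (Finset.mem_erase.mpr ⟨hu, Finset.mem_univ _⟩),
        mul_comm, alpha_mul_beta n hn, if_neg hu, if_pos rfl]
    · rw [Finset.sum_congr rfl (fun j hj =>
        show _ = (if u = j then (if v = j then beta * beta else 0) else 0) from by
        rw [if_neg hu, if_neg hv, zero_add, zero_add, ite_mul, zero_mul, mul_ite, mul_zero]),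
        Finset.sum_ite_eq, if_pos (Finset.mem_erase.mpr ⟨hu, Finset.mem_univ _⟩),
        if_neg hu, if_neg hv]
      by_cases huv : u = v
      · subst huv; rw [if_pos rfl, if_pos rfl, beta_mul_self]
      · rw [if_neg (fun h => huv h.symm), if_neg huv]
lemma card_univ_E : (Finset.univ : Finset (E n)).card = n - 1 := by
  rw [Finset.card_univ, card_E]

lemma mul_SS (hn : 2 ≤ n) : SS n * SS n = S2 n := by
  have hm := m_pos n hn
  have hne : ((n:ℝ)-1) ≠ 0 := ne_of_gt hm
  ext x y
  rcases x with e | u <;> rcases y with f | v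
  · rw [Matrix.mul_apply, Fintype.sum_sum_type]
    simp only [SS, S2, Matrix.of_apply, zero_mul, mul_zero, Finset.sum_const_zero, add_zero]
    simp only [add_mul, mul_add, ite_mul, mul_ite, zero_mul, mul_zero, zero_add, add_zero,
      Finset.sum_add_distrib, Finset.sum_ite_eq, Finset.sum_ite_eq', Finset.mem_univ, if_true,
      Finset.sum_const, card_univ_E, nsmul_eq_mul, hcast' n hn]
    by_cases h : e = f
    · subst h; simp; field_simp; ring
    · simp [h]; field_simp; ring
  · rw [Matrix.mul_apply, Fintype.sum_sum_type]
    simp only [SS, S2, Matrix.of_apply, zero_mul, mul_zero, Finset.sum_const_zero, add_zero]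
  · rw [Matrix.mul_apply, Fintype.sum_sum_type]
    simp only [SS, S2, Matrix.of_apply, zero_mul, mul_zero, Finset.sum_const_zero, add_zero]
  · rw [Matrix.mul_apply, Fintype.sum_sum_type]
    simp only [SS, S2, Matrix.of_apply, zero_mul, mul_zero, Finset.sum_const_zero, zero_add]
    rw [← Finset.add_sum_erase _ _ (Finset.mem_univ (0:Fin n))]
    by_cases hu : u = 0 <;> by_cases hv : v = 0
    · subst hu; subst hv
      rw [Finset.sum_congr rfl (fun w hw => show _ = ab n * ab n from by
        have hw' := (Finset.mem_erase.mp hw).1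
        simp [hw']),
        Finset.sum_const, hcard, nsmul_eq_mul, hcast' n hn, ab_mul_self n hn]
      simp only [if_pos rfl, if_true, if_false, ↓reduceIte]
      field_simp
      ring
    · subst hu
      have h0v : ¬((0:Fin n) = v) := fun h => hv h.symm
      rw [Finset.sum_congr rfl (fun w hw => show _ = (if w = v then ab n * (1/2) else 0) from by
        have hw' := (Finset.mem_erase.mp hw).1
        simp [hw', hv, mul_ite]),
        Finset.sum_ite_eq', if_pos (Finset.mem_erase.mpr ⟨hv, Finset.mem_univ _⟩)]
      simp [hv, h0v]
      ring
    · subst hv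
      have h0u : ¬((0:Fin n) = u) := fun h => hu h.symm
      rw [Finset.sum_congr rfl (fun w hw => show _ = (if u = w then (1/2) * ab n else 0) from by
        have hw' := (Finset.mem_erase.mp hw).1
        simp [hw', hu, ite_mul]),
        Finset.sum_ite_eq, if_pos (Finset.mem_erase.mpr ⟨hu, Finset.mem_univ _⟩)]
      simp [hu, h0u]
      ring
    · have h0v : ¬((0:Fin n) = v) := fun h => hv h.symm
      rw [Finset.sum_congr rfl (fun w hw =>
        show _ = (if w = v then (if u = w then (1/2:ℝ)*(1/2) else 0) else 0) from by
        have hw' := (Finset.mem_erase.mp hw).1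
        simp [hw', hu, hv, ite_mul, mul_ite]),
        Finset.sum_ite_eq', if_pos (Finset.mem_erase.mpr ⟨hv, Finset.mem_univ _⟩)]
      simp [hu, hv, h0v, ab_mul_self n hn]
      by_cases huv : u = v
      · subst huv; simp; norm_num
      · simp [huv]

lemma mul_SS_S2 (hn : 2 ≤ n) :
    SS n * S2 n = (3/2 : ℝ) • S2 n - (1/2 : ℝ) • SS n := by
  have hm := m_pos n hn
  have hne : ((n:ℝ)-1) ≠ 0 := ne_of_gt hm
  ext x y
  rw [Matrix.sub_apply, Matrix.smul_apply, Matrix.smul_apply]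
  rcases x with e | u <;> rcases y with f | v
  · rw [Matrix.mul_apply, Fintype.sum_sum_type]
    simp only [SS, S2, Matrix.of_apply, zero_mul, mul_zero, Finset.sum_const_zero, add_zero]
    simp only [add_mul, mul_add, ite_mul, mul_ite, zero_mul, mul_zero, zero_add, add_zero,
      Finset.sum_add_distrib, Finset.sum_ite_eq, Finset.sum_ite_eq', Finset.mem_univ, if_true,
      Finset.sum_const, card_univ_E, nsmul_eq_mul, hcast' n hn, smul_eq_mul]
    by_cases h : e = f
    · subst h; simp; field_simp; ring
    · simp [h]; field_simp; ring
  · rw [Matrix.mul_apply, Fintype.sum_sum_type]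
    simp only [SS, S2, Matrix.of_apply, zero_mul, mul_zero, Finset.sum_const_zero, add_zero,
      smul_eq_mul]
    ring
  · rw [Matrix.mul_apply, Fintype.sum_sum_type]
    simp only [SS, S2, Matrix.of_apply, zero_mul, mul_zero, Finset.sum_const_zero, add_zero,
      smul_eq_mul]
    ring
  · rw [Matrix.mul_apply, Fintype.sum_sum_type]
    simp only [SS, S2, Matrix.of_apply, zero_mul, mul_zero, Finset.sum_const_zero, zero_add,
      smul_eq_mul]
    rw [← Finset.add_sum_erase _ _ (Finset.mem_univ (0:Fin n))]
    by_cases hu : u = 0 <;> by_cases hv : v = 0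
    · subst hu; subst hv
      rw [Finset.sum_congr rfl (fun w hw => show _ = ab n * ab n from by
        have hw' := (Finset.mem_erase.mp hw).1
        simp [hw']),
        Finset.sum_const, hcard, nsmul_eq_mul, hcast' n hn, ab_mul_self n hn]
      simp only [if_pos rfl, if_true, if_false, ↓reduceIte]
      field_simp
      ring
    · subst hu
      have h0v : ¬((0:Fin n) = v) := fun h => hv h.symm
      rw [Finset.sum_congr rfl (fun w hw =>
        show _ = ab n * (1/(4*((n:ℝ)-1))) + (if w = v then ab n * (1/4) else 0) from by
        have hw' := (Finset.mem_erase.mp hw).1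
        simp [hw', hv, mul_add, mul_ite]),
        Finset.sum_add_distrib, Finset.sum_const, hcard, nsmul_eq_mul, hcast' n hn,
        Finset.sum_ite_eq', if_pos (Finset.mem_erase.mpr ⟨hv, Finset.mem_univ _⟩)]
      simp [hv, h0v]
      field_simp
      ring
    · subst hv
      have h0u : ¬((0:Fin n) = u) := fun h => hu h.symm
      rw [Finset.sum_congr rfl (fun w hw => show _ = (if u = w then (1/2) * ab n else 0) from by
        have hw' := (Finset.mem_erase.mp hw).1
        simp [hw', hu, ite_mul]),
        Finset.sum_ite_eq, if_pos (Finset.mem_erase.mpr ⟨hu, Finset.mem_univ _⟩)]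
      simp [hu, h0u]
      ring
    · have h0v : ¬((0:Fin n) = v) := fun h => hv h.symm
      rw [Finset.sum_congr rfl (fun w hw =>
        show _ = (if u = w then (1/2) * (1/(4*((n:ℝ)-1)) + if w = v then (1/4:ℝ) else 0) else 0)
          from by
        have hw' := (Finset.mem_erase.mp hw).1
        simp [hw', hu, hv, ite_mul]),
        Finset.sum_ite_eq, if_pos (Finset.mem_erase.mpr ⟨hu, Finset.mem_univ _⟩)]
      simp [hu, hv, h0v, ab_mul_self n hn]
      by_cases huv : u = v
      · subst huv; simp; field_simp; ring
      · simp [huv]; field_simp; ring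
lemma trace_SS (hn : 2 ≤ n) : (SS n).trace = (n : ℝ) := by
  have hne : ((n:ℝ)-1) ≠ 0 := ne_of_gt (m_pos n hn)
  rw [Matrix.trace, Fintype.sum_sum_type,
    Finset.sum_congr rfl (fun (e : E n) _ =>
      show (SS n).diag (inl e) = 1/(2*((n:ℝ)-1)) + 1/2 from by simp [SS, Matrix.diag]),
    Finset.sum_congr rfl (fun (v : Fin n) _ =>
      show (SS n).diag (inr v) = (1/2 : ℝ) from by
        by_cases h : v = 0 <;> simp [SS, Matrix.diag, h]),
    Finset.sum_const, Finset.sum_const, card_univ_E, Finset.card_univ, Fintype.card_fin,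
    nsmul_eq_mul, nsmul_eq_mul, hcast' n hn]
  field_simp
  ring

lemma trace_S2 (hn : 2 ≤ n) : (S2 n).trace = ((n : ℝ) + 2)/2 := by
  have hne : ((n:ℝ)-1) ≠ 0 := ne_of_gt (m_pos n hn)
  rw [Matrix.trace, Fintype.sum_sum_type,
    Finset.sum_congr rfl (fun (e : E n) _ =>
      show (S2 n).diag (inl e) = 3/(4*((n:ℝ)-1)) + 1/4 from by simp [S2, Matrix.diag]),
    Finset.sum_congr rfl (fun (v : Fin n) _ =>
      show (S2 n).diag (inr v)
          = (if v = 0 then (1/4 - 1/(4*((n:ℝ)-1))) else 0) + (1/(4*((n:ℝ)-1)) + 1/4) from by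
        by_cases h : v = 0 <;> simp [S2, Matrix.diag, h] <;> ring),
    Finset.sum_add_distrib, Finset.sum_add_distrib, Finset.sum_ite_eq',
    if_pos (Finset.mem_univ _), Finset.sum_const, Finset.sum_const, Finset.sum_const,
    card_univ_E, Finset.card_univ, Fintype.card_fin]
  simp only [nsmul_eq_mul, hcast' n hn]
  field_simp
  ring

end StarSub

variable {ι : Type*} [Fintype ι] [DecidableEq ι]



lemma conjPow' {U D Us A : Matrix ι ι ℝ} (hU : Us * U = 1) (hU2 : U * Us = 1)
    (hst : A = U * D * Us) (k : ℕ) : A ^ k = U * D ^ k * Us := by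
  induction k with
  | zero => simpa using hU2.symm
  | succ k ih =>
    rw [pow_succ, ih, hst]
    calc U * D ^ k * Us * (U * D * Us) = U * (D ^ k * (Us * U) * D) * Us := by noncomm_ring
      _ = U * D ^ (k+1) * Us := by rw [hU]; noncomm_ring

lemma trace_pow_eq {A : Matrix ι ι ℝ} (hA : A.IsHermitian) (k : ℕ) :
    (A ^ k).trace = ∑ i, (hA.eigenvalues i) ^ k := by
  have hU : (star (hA.eigenvectorUnitary : Matrix ι ι ℝ)) * (hA.eigenvectorUnitary : Matrix ι ι ℝ) = 1 :=
    Unitary.coe_star_mul_self _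
  have hst := hA.spectral_theorem
  simp only [RCLike.ofReal_real_eq_id, Function.comp_id] at hst
  have h := conjPow' hU (Unitary.coe_mul_star_self _) hst k
  rw [h, Matrix.trace_mul_cycle, hU, Matrix.one_mul,
    Matrix.diagonal_pow, Matrix.trace_diagonal]
  simp [Pi.pow_apply]

lemma pow_mulVec_eig {A : Matrix ι ι ℝ} (hA : A.IsHermitian) (k : ℕ) (i : ι) :
    (A ^ k) *ᵥ ⇑(hA.eigenvectorBasis i) = ((hA.eigenvalues i) ^ k) • ⇑(hA.eigenvectorBasis i) := by
  induction k with
  | zero => simp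
  | succ k ih =>
    rw [pow_succ, ← Matrix.mulVec_mulVec, hA.mulVec_eigenvectorBasis, Matrix.mulVec_smul, ih,
      smul_smul, pow_succ]
    ring_nf

lemma eig_sq_cases {A : Matrix ι ι ℝ} (hA : A.IsHermitian)
    (hp : A ^ 6 = (3/2 : ℝ) • A ^ 4 - (1/2 : ℝ) • A ^ 2) (i : ι) :
    (hA.eigenvalues i) ^ 2 = 0 ∨ (hA.eigenvalues i) ^ 2 = 1/2 ∨ (hA.eigenvalues i) ^ 2 = 1 := by
  set lam := hA.eigenvalues i with hlam
  have hv : ⇑(hA.eigenvectorBasis i) ≠ 0 := by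
    have := hA.eigenvectorBasis.orthonormal.ne_zero i
    exact fun h => this (by ext j; exact congrFun h j)
  have h6 := pow_mulVec_eig hA 6 i
  rw [hp] at h6
  rw [Matrix.sub_mulVec, Matrix.smul_mulVec, Matrix.smul_mulVec,
    pow_mulVec_eig hA 4 i, pow_mulVec_eig hA 2 i] at h6
  have : (lam ^ 6 - ((3/2) * lam ^ 4 - (1/2) * lam ^ 2)) • ⇑(hA.eigenvectorBasis i) = 0 := by
    rw [sub_smul, ← h6]
    module
  rcases smul_eq_zero.mp this with h | h
  · have h0 : lam ^ 2 * (lam ^ 2 - 1/2) * (lam ^ 2 - 1) = 0 := by nlinarith [h]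
    rcases mul_eq_zero.mp h0 with h1 | h1
    · rcases mul_eq_zero.mp h1 with h2 | h2
      · exact Or.inl h2
      · exact Or.inr (Or.inl (by linarith))
    · exact Or.inr (Or.inr (by linarith))
  · exact absurd h hv

/-- The Randić energy of the subdivision of the star `S_n` (`n ≥ 2`) equals
`√2 n + 2 - 2√2`. -/
theorem randicEnergy_subdivision_star (n : ℕ) (hn : 2 ≤ n)
    (hH : (randicMatrix (subdivision (starGraph n))).IsHermitian) :
    ∑ i, |hH.eigenvalues i| = Real.sqrt 2 * n + 2 - 2 * Real.sqrt 2 := by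
  haveI : NeZero n := ⟨by omega⟩
  have hA2 : (randicMatrix (subdivision (starGraph n))) ^ 2 = StarSub.SS n := by
    rw [pow_two, StarSub.randic_eq n hn, StarSub.mul_MM n hn]
  have hA4 : (randicMatrix (subdivision (starGraph n))) ^ 4 = StarSub.S2 n := by
    rw [show (4:ℕ) = 2 + 2 by norm_num, pow_add, hA2, StarSub.mul_SS n hn]
  have hp : (randicMatrix (subdivision (starGraph n))) ^ 6
      = (3/2 : ℝ) • (randicMatrix (subdivision (starGraph n))) ^ 4
        - (1/2 : ℝ) • (randicMatrix (subdivision (starGraph n))) ^ 2 := by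
    rw [show (6:ℕ) = 2 + 4 by norm_num, pow_add, hA2, hA4, StarSub.mul_SS_S2 n hn]
  have heig := eig_sq_cases hH hp
  have htr2 : ∑ i, (hH.eigenvalues i) ^ 2 = (n : ℝ) := by
    rw [← trace_pow_eq hH 2, hA2, StarSub.trace_SS n hn]
  have htr4 : ∑ i, (hH.eigenvalues i) ^ 4 = ((n : ℝ) + 2)/2 := by
    rw [← trace_pow_eq hH 4, hA4, StarSub.trace_S2 n hn]
  have hs2 : Real.sqrt 2 * Real.sqrt 2 = 2 := Real.mul_self_sqrt (by norm_num)
  have key : ∀ i, |hH.eigenvalues i| =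
      (2*Real.sqrt 2 - 1) * (hH.eigenvalues i)^2 + (2 - 2*Real.sqrt 2) * (hH.eigenvalues i)^4 := by
    intro i
    set lam := hH.eigenvalues i
    have h4 : lam^4 = (lam^2)^2 := by ring
    rcases heig i with h | h | h
    · have h0 : lam = 0 := by
        have h' : lam * lam = 0 := by linear_combination h
        rcases mul_eq_zero.mp h' with h0 | h0 <;> exact h0
      rw [h0]; norm_num
    · have habs : |lam| = Real.sqrt (1/2) := by
        rw [← h, Real.sqrt_sq_eq_abs]
      have hhalf : Real.sqrt (1/2) = Real.sqrt 2 / 2 := by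
        rw [show (1/2:ℝ) = (Real.sqrt 2 / 2)^2 by nlinarith [hs2], Real.sqrt_sq (by positivity)]
      rw [habs, hhalf, h4, h]
      ring
    · have habs : |lam| = 1 := by
        rw [← Real.sqrt_sq_eq_abs, h, Real.sqrt_one]
      rw [habs, h4, h]
      ring
  calc ∑ i, |hH.eigenvalues i|
      = ∑ i, ((2*Real.sqrt 2 - 1) * (hH.eigenvalues i)^2
          + (2 - 2*Real.sqrt 2) * (hH.eigenvalues i)^4) := Finset.sum_congr rfl (fun i _ => key i)
    _ = (2*Real.sqrt 2 - 1) * (∑ i, (hH.eigenvalues i)^2)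
          + (2 - 2*Real.sqrt 2) * (∑ i, (hH.eigenvalues i)^4) := by
        rw [Finset.sum_add_distrib, Finset.mul_sum, Finset.mul_sum]
    _ = Real.sqrt 2 * n + 2 - 2 * Real.sqrt 2 := by
        rw [htr2, htr4]; ring
end

section
/- If a connected graph G on n ≥ 3 vertices with m edges has exactly k distinct Randić eigenvalues 1, ρ_2, …, ρ_k, then every column of the matrix H = ∏_{i=2}^k (R − ρ_i I) is a scalar multiple of the vector α = (√d_1, …, √d_n)ᵀ, and in fact H = (∏_{i=2}^k(1−ρ_i)/(2m)) · α αᵀ. -/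
open Matrix BigOperators

variable {V : Type*} [Fintype V] [DecidableEq V]

section Aux
variable (G : SimpleGraph V) [DecidableRel G.Adj]

lemma randic_symm (i j : V) : randicMatrix G i j = randicMatrix G j i := by
  by_cases h : G.Adj i j
  · simp [randicMatrix, h, h.symm, mul_comm]
  · have h' : ¬ G.Adj j i := fun hh => h hh.symm
    simp [randicMatrix, h, h']

lemma randic_isHermitian_s19 : (randicMatrix G).IsHermitian := by
  refine Matrix.ext fun i j => ?_
  simp [conjTranspose_apply, randic_symm G j i]

lemma degree_pos_of_connected (hconn : G.Connected) (hn : 2 ≤ Fintype.card V) (v : V) :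
    0 < G.degree v := by
  rw [G.degree_pos_iff_exists_adj]
  obtain ⟨w, -, hw⟩ := Finset.exists_mem_ne (s := (Finset.univ : Finset V))
    (by rw [Finset.card_univ]; omega) v
  obtain ⟨p⟩ := hconn.preconnected v w
  cases p with
  | nil => exact absurd rfl hw
  | cons h _ => exact ⟨_, h⟩

lemma randic_mulVec_sqrt (hd : ∀ v, 0 < G.degree v) :
    randicMatrix G *ᵥ (fun v => Real.sqrt (G.degree v)) = fun v => Real.sqrt (G.degree v) := by
  funext i
  have hdR : ∀ v, (0:ℝ) < (G.degree v : ℝ) := fun v => by exact_mod_cast hd v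
  have key : ∀ j : V, (if G.Adj i j then 1 / Real.sqrt ((G.degree i : ℝ) * (G.degree j : ℝ)) else 0)
      * Real.sqrt (G.degree j) = if G.Adj i j then 1 / Real.sqrt (G.degree i) else 0 := by
    intro j
    split
    · rw [Real.sqrt_mul (le_of_lt (hdR i))]
      have h1 : Real.sqrt (G.degree j : ℝ) ≠ 0 := ne_of_gt (Real.sqrt_pos.2 (hdR j))
      rw [div_mul_eq_mul_div, one_mul, mul_comm, ← div_div, div_self h1]
    · simp
  simp only [mulVec, dotProduct, randicMatrix, of_apply]
  rw [Finset.sum_congr rfl (fun j _ => key j), ← Finset.sum_filter,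
    ← SimpleGraph.neighborFinset_eq_filter, Finset.sum_const,
    SimpleGraph.card_neighborFinset_eq_degree, nsmul_eq_mul, mul_one_div, Real.div_sqrt]

lemma randic_eig_one (hconn : G.Connected) (hn : 2 ≤ Fintype.card V) (x : V → ℝ)
    (hx : randicMatrix G *ᵥ x = x) :
    ∃ t : ℝ, ∀ v, x v = t * Real.sqrt (G.degree v) := by
  have hd := degree_pos_of_connected G hconn hn
  have hdR : ∀ v, (0:ℝ) < (G.degree v : ℝ) := fun v => by exact_mod_cast hd v
  have hsq : ∀ v, Real.sqrt (G.degree v : ℝ) ≠ 0 := fun v => ne_of_gt (Real.sqrt_pos.2 (hdR v))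
  set y : V → ℝ := fun v => x v / Real.sqrt (G.degree v) with hy
  have harm : ∀ i, ∑ j ∈ G.neighborFinset i, y j = (G.degree i : ℝ) * y i := by
    intro i
    have hxi := congrFun hx i
    simp only [mulVec, dotProduct, randicMatrix, of_apply] at hxi
    have key : ∀ j : V, (if G.Adj i j then 1 / Real.sqrt ((G.degree i : ℝ) * (G.degree j : ℝ)) else 0)
        * x j = if G.Adj i j then y j / Real.sqrt (G.degree i) else 0 := by
      intro j
      split
      · rw [Real.sqrt_mul (le_of_lt (hdR i))]
        field_simp [hy]
        ring
      · simp
    rw [Finset.sum_congr rfl (fun j _ => key j), ← Finset.sum_filter,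
      ← SimpleGraph.neighborFinset_eq_filter, ← Finset.sum_div] at hxi
    rw [div_eq_iff (hsq i)] at hxi
    have h2 : (G.degree i : ℝ) * y i = x i * Real.sqrt (G.degree i) := by
      rw [hy]
      simp only []
      rw [mul_comm, div_mul_eq_mul_div, mul_div_assoc, Real.div_sqrt]
    rw [hxi, h2]
  have hne : Nonempty V := Fintype.card_pos_iff.mp (by omega)
  obtain ⟨v0, -, hmax⟩ := Finset.exists_max_image Finset.univ y ⟨Classical.arbitrary V, Finset.mem_univ _⟩
  set M := y v0 with hM
  have step : ∀ a b : V, G.Adj a b → y a = M → y b = M := by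
    intro a b hab ha
    by_contra hb
    have hblt : y b < M := lt_of_le_of_ne (hmax b (Finset.mem_univ b)) hb
    have hlt : ∑ j ∈ G.neighborFinset a, y j < ∑ j ∈ G.neighborFinset a, M := by
      refine Finset.sum_lt_sum (fun j _ => hmax j (Finset.mem_univ j)) ?_
      exact ⟨b, (SimpleGraph.mem_neighborFinset G a b).2 hab, hblt⟩
    rw [harm a, ha, Finset.sum_const, SimpleGraph.card_neighborFinset_eq_degree,
      nsmul_eq_mul] at hlt
    exact lt_irrefl _ hlt
  have walkstep : ∀ {a b : V} (p : G.Walk a b), y a = M → y b = M := by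
    intro a b p
    induction p with
    | nil => exact id
    | cons h _ ih => exact fun ha => ih (step _ _ h ha)
  refine ⟨M, fun v => ?_⟩
  have hv : y v = M := walkstep (hconn.preconnected v0 v).some rfl
  rw [← hv, hy]
  exact (div_mul_cancel₀ (x v) (hsq v)).symm

lemma conj_prod_diag (Um : Matrix V V ℝ) (h1 : star Um * Um = 1) (h2 : Um * star Um = 1)
    (ev : V → ℝ) (cs : List ℝ) :
    ((cs.map (fun c => Um * Matrix.diagonal ev * star Um - c • (1 : Matrix V V ℝ))).prod)
      = Um * Matrix.diagonal (fun i => ((cs.map (fun c => ev i - c)).prod)) * star Um := by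
  induction cs with
  | nil =>
      simp only [List.map_nil, List.prod_nil]
      rw [Matrix.diagonal_one, Matrix.mul_one, h2]
  | cons c cs ih =>
      have hfac : Um * Matrix.diagonal ev * star Um - c • (1 : Matrix V V ℝ)
          = Um * Matrix.diagonal (fun i => ev i - c) * star Um := by
        have hdiag : Matrix.diagonal (fun i => ev i - c)
            = Matrix.diagonal ev - c • (1 : Matrix V V ℝ) := by
          ext i j
          by_cases h : i = j
          · subst h; simp
          · simp [Matrix.diagonal_apply_ne _ h, Matrix.one_apply_ne h]
        rw [hdiag, Matrix.mul_sub, Matrix.sub_mul, Matrix.mul_smul, Matrix.smul_mul, mul_one, h2]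
      rw [List.map_cons, List.prod_cons, ih, hfac]
      rw [show (fun i : V => (((c :: cs).map (fun c => ev i - c)).prod))
          = fun i : V => (ev i - c) * ((cs.map (fun c => ev i - c)).prod) from rfl]
      rw [← Matrix.diagonal_mul_diagonal]
      simp only [Matrix.mul_assoc]
      rw [show star Um * (Um * (Matrix.diagonal (fun i => (cs.map (fun c => ev i - c)).prod) * star Um))
          = Matrix.diagonal (fun i => (cs.map (fun c => ev i - c)).prod) * star Um from by
        rw [← Matrix.mul_assoc, ← Matrix.mul_assoc, h1, Matrix.one_mul]]

lemma randic_ann {k : ℕ} (ρ : Fin (k-1) → ℝ)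
    (hspec : spectrum ℝ (randicMatrix G) = insert (1 : ℝ) (Set.range ρ)) :
    (randicMatrix G - (1:ℝ) • (1 : Matrix V V ℝ)) *
      ((List.finRange (k - 1)).map
        (fun l => randicMatrix G - ρ l • (1 : Matrix V V ℝ))).prod = 0 := by
  have hA := randic_isHermitian_s19 G
  set Um : Matrix V V ℝ := (hA.eigenvectorUnitary : Matrix V V ℝ) with hUm
  have h1 : star Um * Um = 1 := Matrix.mem_unitaryGroup_iff'.mp hA.eigenvectorUnitary.2
  have h2 : Um * star Um = 1 := Matrix.mem_unitaryGroup_iff.mp hA.eigenvectorUnitary.2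
  have hdiag : randicMatrix G = Um * Matrix.diagonal hA.eigenvalues * star Um := by
    simpa [RCLike.ofReal_real_eq_id, Function.id_comp] using hA.spectral_theorem
  have hl : (randicMatrix G - (1:ℝ) • (1 : Matrix V V ℝ)) *
      ((List.finRange (k - 1)).map
        (fun l => randicMatrix G - ρ l • (1 : Matrix V V ℝ))).prod
      = (((1:ℝ) :: (List.finRange (k-1)).map ρ).map
          (fun c => randicMatrix G - c • (1 : Matrix V V ℝ))).prod := by
    rw [List.map_cons, List.prod_cons, List.map_map]
    rfl
  rw [hl, hdiag, conj_prod_diag Um h1 h2]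
  have hz : (fun i => ((((1:ℝ) :: (List.finRange (k-1)).map ρ).map
      (fun c => hA.eigenvalues i - c)).prod)) = fun _ => (0:ℝ) := by
    funext i
    have hmem := hA.eigenvalues_mem_spectrum_real i
    rw [hspec] at hmem
    rcases Set.mem_insert_iff.mp hmem with h | ⟨l, hl'⟩
    · rw [List.map_cons, List.prod_cons, h, sub_self, zero_mul]
    · apply List.prod_eq_zero
      refine List.mem_map.2 ⟨ρ l, List.mem_cons_of_mem _ (List.mem_map.2 ⟨l, List.mem_finRange l, rfl⟩), ?_⟩
      rw [← hl', sub_self]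
  rw [hz, Matrix.diagonal_zero, Matrix.mul_zero, Matrix.zero_mul]

lemma vecMul_prod_list {k : ℕ} (ρ : Fin (k-1) → ℝ) (hd : ∀ v, 0 < G.degree v)
    (ls : List (Fin (k-1))) :
    (fun v => Real.sqrt (G.degree v)) ᵥ*
        ((ls.map (fun l => randicMatrix G - ρ l • (1 : Matrix V V ℝ))).prod)
      = ((ls.map (fun l => 1 - ρ l)).prod) • (fun v => Real.sqrt (G.degree v)) := by
  induction ls with
  | nil => simp [Matrix.vecMul_one]
  | cons a tl ih =>
    rw [List.map_cons, List.prod_cons, ← Matrix.vecMul_vecMul]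
    have hR : (fun v => Real.sqrt (G.degree v)) ᵥ* randicMatrix G
        = fun v => Real.sqrt (G.degree v) := by
      funext j
      have hmv := congrFun (randic_mulVec_sqrt G hd) j
      simp only [vecMul, mulVec, dotProduct] at hmv ⊢
      rw [← hmv]
      exact Finset.sum_congr rfl fun i _ => by rw [randic_symm G i j, mul_comm]
    have hone : (fun v => Real.sqrt (G.degree v)) ᵥ* (ρ a • (1:Matrix V V ℝ))
        = ρ a • fun v => Real.sqrt (G.degree v) := by
      funext j
      simp [vecMul, dotProduct, Matrix.smul_apply, Matrix.one_apply, mul_ite,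
        Finset.sum_ite_eq, mul_comm]
    have hstep : (fun v => Real.sqrt (G.degree v)) ᵥ* (randicMatrix G - ρ a • (1:Matrix V V ℝ))
        = (1 - ρ a) • (fun v => Real.sqrt (G.degree v)) := by
      rw [Matrix.vecMul_sub, hR, hone, sub_smul, one_smul]
    rw [hstep, Matrix.smul_vecMul, ih, smul_smul, List.map_cons, List.prod_cons]
end Aux


/-- If a connected graph `G` on `n ≥ 3` vertices with `m` edges has exactly the `k` distinct
Randić eigenvalues `1, ρ₂, …, ρ_k`, then every column of `H = ∏ (R - ρ_i I)` is a scalar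
multiple of `α = (√d_i)`, and in fact `H = (∏ (1 - ρ_i) / (2m)) • α αᵀ`. -/
theorem randic_columns_multiple_of_perron (G : SimpleGraph V) [DecidableRel G.Adj]
    (hconn : G.Connected) (hn : 3 ≤ Fintype.card V) (k : ℕ) (hk2 : 2 ≤ k)
    (ρ : Fin (k - 1) → ℝ) (hinj : Function.Injective ρ) (hne1 : ∀ i, ρ i ≠ 1)
    (hspec : spectrum ℝ (randicMatrix G) = insert (1 : ℝ) (Set.range ρ)) :
    (∀ j : V, ∃ t : ℝ, ∀ i : V,
        ((List.finRange (k - 1)).map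
            (fun l => randicMatrix G - ρ l • (1 : Matrix V V ℝ))).prod i j =
          t * Real.sqrt (G.degree i)) ∧
      ((List.finRange (k - 1)).map
          (fun l => randicMatrix G - ρ l • (1 : Matrix V V ℝ))).prod =
        ((∏ l, (1 - ρ l)) / (2 * G.edgeFinset.card)) •
          Matrix.vecMulVec (fun v => Real.sqrt (G.degree v))
            (fun v => Real.sqrt (G.degree v)) := by
  have hd : ∀ v, 0 < G.degree v := degree_pos_of_connected G hconn (by omega)
  have hdR : ∀ v, (0:ℝ) < (G.degree v : ℝ) := fun v => by exact_mod_cast hd v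
  set α : V → ℝ := fun v => Real.sqrt (G.degree v) with hα
  set H := ((List.finRange (k - 1)).map
      (fun l => randicMatrix G - ρ l • (1 : Matrix V V ℝ))).prod with hH
  have hann := randic_ann G ρ hspec
  have hRH : randicMatrix G * H = H := by
    rw [sub_mul, one_smul, one_mul, sub_eq_zero] at hann
    exact hann
  have hcol : ∀ j, ∃ t, ∀ i, H i j = t * α i := by
    intro j
    have hx : randicMatrix G *ᵥ (fun i => H i j) = fun i => H i j := by
      funext i
      have h := congrFun (congrFun hRH i) j
      simpa [Matrix.mul_apply, mulVec, dotProduct] using h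
    exact randic_eig_one G hconn (by omega) _ hx
  refine ⟨hcol, ?_⟩
  choose t ht using hcol
  have hvH := vecMul_prod_list G ρ hd (List.finRange (k-1))
  have hq : ((List.finRange (k-1)).map (fun l => (1:ℝ) - ρ l)).prod = ∏ l, (1 - ρ l) :=
    (Fin.prod_univ_def _).symm
  rw [hq] at hvH
  have hm0 : 0 < G.edgeFinset.card := by
    have hne : Nonempty V := Fintype.card_pos_iff.mp (by omega)
    obtain ⟨w, hw⟩ := (G.degree_pos_iff_exists_adj (Classical.arbitrary V)).mp (hd _)
    exact Finset.card_pos.2 ⟨_, SimpleGraph.mem_edgeFinset.2 ((SimpleGraph.mem_edgeSet G).2 hw)⟩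
  have hmR : (0:ℝ) < 2 * (G.edgeFinset.card : ℝ) := by
    have : (0:ℝ) < (G.edgeFinset.card : ℝ) := by exact_mod_cast hm0
    linarith
  have hsum : ∑ i, α i * α i = 2 * (G.edgeFinset.card : ℝ) := by
    have hsq : ∀ i, α i * α i = (G.degree i : ℝ) := fun i =>
      Real.mul_self_sqrt (le_of_lt (hdR i))
    rw [Finset.sum_congr rfl (fun i _ => hsq i), ← Nat.cast_sum,
      SimpleGraph.sum_degrees_eq_twice_card_edges]
    push_cast
    ring
  have htj : ∀ j, t j = (∏ l, (1 - ρ l)) * α j / (2 * (G.edgeFinset.card : ℝ)) := by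
    intro j
    have h1 := congrFun hvH j
    simp only [vecMul, dotProduct, Pi.smul_apply, smul_eq_mul] at h1
    have h2 : ∑ i, α i * H i j = t j * (2 * (G.edgeFinset.card:ℝ)) := by
      rw [← hsum, Finset.mul_sum]
      exact Finset.sum_congr rfl fun i _ => by rw [ht j i]; ring
    rw [h2] at h1
    rw [eq_div_iff (ne_of_gt hmR)]
    exact h1
  ext i j
  rw [ht j i, htj j]
  simp only [Matrix.smul_apply, Matrix.vecMulVec_apply, smul_eq_mul]
  ring
end
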